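/- Let m ≥ 4 be even and Ψ an m-order n-dimensional real symmetric tensor such that Ψ_{i₁⋯i_m} is nonzero only if half of the indices equal some j and the other half equal some k, and such that for all j, k, |Ψ_{j⋯j}| ≥ C(m−1, m/2) |Ψ_{j⋯jk⋯k}| (diagonal dominance). Then Q(Ψ) = Z(Ψ) = max_j |Ψ_{j⋯j}|. -/

import Mathlib

open Finset

noncomputable section

/-- Contraction `T z^m` of an `(m+1)`-order tensor with entries in `ℂ`. -/
def tapplyC {m : ℕ} {ι : Type} [Fintype ι] (T : (Fin (m + 1) → ι) → ℂ)
    (z : ι → ℂ) : ι → ℂ :=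
  fun i => ∑ f : Fin m → ι, T (Fin.cons i f) * ∏ j, z (f j)

/-- Contraction `T x^m` of an `(m+1)`-order tensor with entries in `ℝ`. -/
def tapplyR {m : ℕ} {ι : Type} [Fintype ι] (T : (Fin (m + 1) → ι) → ℝ)
    (x : ι → ℝ) : ι → ℝ :=
  fun i => ∑ f : Fin m → ι, T (Fin.cons i f) * ∏ j, x (f j)

/-- A tensor is symmetric if its entries are invariant under index permutations. -/
def SymmT {m : ℕ} {ι R : Type} (T : (Fin m → ι) → R) : Prop :=
  ∀ (σ : Equiv.Perm (Fin m)) (f : Fin m → ι), T (f ∘ σ) = T f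

/-- `lam` is a Q-eigenvalue of the complex tensor `T` with Q-eigenvector `z`:
`T z^{m} = lam * conj z` and `z̄ᵀ z = 1`. -/
def IsQEig {m : ℕ} {ι : Type} [Fintype ι] (T : (Fin (m + 1) → ι) → ℂ)
    (lam : ℝ) (z : ι → ℂ) : Prop :=
  tapplyC T z = (fun i => (lam : ℂ) * (starRingEnd ℂ) (z i)) ∧
    ∑ i, (starRingEnd ℂ) (z i) * z i = 1

/-- `lam` is a Z-eigenvalue of the real tensor `T` with Z-eigenvector `x`. -/
def IsZEig {m : ℕ} {ι : Type} [Fintype ι] (T : (Fin (m + 1) → ι) → ℝ)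
    (lam : ℝ) (x : ι → ℝ) : Prop :=
  tapplyR T x = (fun i => lam * x i) ∧ ∑ i, x i ^ 2 = 1

/-- Complexification of a real tensor. -/
def toC {m : ℕ} {ι : Type} (T : (Fin (m + 1) → ι) → ℝ) :
    (Fin (m + 1) → ι) → ℂ := fun f => ((T f : ℝ) : ℂ)

/-- The entanglement eigenvalue of a real tensor: largest Q-eigenvalue. -/
def QmaxR {m : ℕ} {ι : Type} [Fintype ι] (T : (Fin (m + 1) → ι) → ℝ) : ℝ :=
  sSup {lam : ℝ | ∃ z : ι → ℂ, IsQEig (toC T) lam z}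

/-- The Z-spectral radius of a real tensor: largest `|λ|` over Z-eigenvalues. -/
def Zrad {m : ℕ} {ι : Type} [Fintype ι] (T : (Fin (m + 1) → ι) → ℝ) : ℝ :=
  sSup {r : ℝ | ∃ (lam : ℝ) (x : ι → ℝ), IsZEig T lam x ∧ r = |lam|}

/-- Frobenius norm of a real tensor. -/
def fnorm {m : ℕ} {ι : Type} [Fintype ι] (T : (Fin m → ι) → ℝ) : ℝ :=
  Real.sqrt (∑ f : Fin m → ι, T f ^ 2)


-- square sum identity
lemma sq_sum_split {n : ℕ} (x : Fin n → ℝ) :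
    (∑ j, x j) ^ 2 = ∑ j, x j * x j
      + 2 * ∑ p ∈ univ.filter (fun p : Fin n × Fin n => p.1 < p.2), x p.1 * x p.2 := by
  classical
  have h0 : (∑ j, x j) ^ 2 = ∑ p : Fin n × Fin n, x p.1 * x p.2 := by
    rw [sq, Finset.sum_mul_sum, ← Fintype.sum_prod_type']
  rw [h0, ← Finset.sum_filter_add_sum_filter_not univ (fun p : Fin n × Fin n => p.1 < p.2)
    (fun p => x p.1 * x p.2)]
  have h1 : ∑ p ∈ univ.filter (fun p : Fin n × Fin n => ¬ p.1 < p.2), x p.1 * x p.2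
      = ∑ p ∈ (univ.filter (fun p : Fin n × Fin n => ¬ p.1 < p.2)).filter
          (fun p => p.1 = p.2), x p.1 * x p.2
        + ∑ p ∈ (univ.filter (fun p : Fin n × Fin n => ¬ p.1 < p.2)).filter
          (fun p => ¬ p.1 = p.2), x p.1 * x p.2 :=
    (Finset.sum_filter_add_sum_filter_not _ _ _).symm
  have h2 : ∑ p ∈ (univ.filter (fun p : Fin n × Fin n => ¬ p.1 < p.2)).filter
      (fun p => p.1 = p.2), x p.1 * x p.2 = ∑ j, x j * x j := by
    apply Finset.sum_nbij' (i := fun p => p.1) (j := fun j => (j, j))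
    · intro p hp; exact mem_univ _
    · intro j hj
      exact mem_filter.2 ⟨mem_filter.2 ⟨mem_univ _, lt_irrefl j⟩, rfl⟩
    · intro p hp
      simp only [mem_filter] at hp
      exact Prod.ext rfl hp.2
    · intro j hj; rfl
    · intro p hp
      simp only [mem_filter] at hp
      rw [← hp.2]
  have h3 : ∑ p ∈ (univ.filter (fun p : Fin n × Fin n => ¬ p.1 < p.2)).filter
      (fun p => ¬ p.1 = p.2), x p.1 * x p.2
      = ∑ p ∈ univ.filter (fun p : Fin n × Fin n => p.1 < p.2), x p.1 * x p.2 := by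
    apply Finset.sum_nbij' (i := Prod.swap) (j := Prod.swap)
    · intro p hp
      simp only [mem_filter, mem_univ, true_and] at hp ⊢
      rcases lt_trichotomy p.1 p.2 with h | h | h
      · exact absurd h hp.1
      · exact absurd h hp.2
      · exact h
    · intro p hp
      simp only [mem_filter, mem_univ, true_and] at hp ⊢
      exact ⟨not_lt.2 hp.le, ne_of_gt hp⟩
    · intro p hp; exact Prod.swap_swap p
    · intro p hp; exact Prod.swap_swap p
    · intro p hp; exact mul_comm _ _
  rw [h1, h2, h3]; ring

lemma card_other {M n : ℕ} {h : ℕ} (hM : M = h + h)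
    (g : Fin M → Fin n) (j k : Fin n) (hjk : j ≠ k)
    (hcard : (univ.filter fun t => g t = j).card = h)
    (hval : ∀ t, g t = j ∨ g t = k) :
    (univ.filter fun t => g t = k).card = h := by
  classical
  have h1 : (univ.filter fun t => g t = k) = (univ.filter fun t => ¬ g t = j) := by
    apply Finset.filter_congr
    intro t _
    constructor
    · intro e ej; exact hjk (ej.symm.trans e)
    · intro ej; rcases hval t with e | e
      · exact absurd e ej
      · exact e
  have h2 := Finset.card_filter_add_card_filter_not
    (s := (univ : Finset (Fin M))) (p := fun t => g t = j)
  rw [Finset.card_univ, Fintype.card_fin] at h2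
  rw [h1]
  omega

lemma prod_two_vals {M n : ℕ} {h : ℕ} (hM : M = h + h) (w : Fin n → ℝ)
    (g : Fin M → Fin n) (j k : Fin n) (hjk : j ≠ k)
    (hcard : (univ.filter fun t => g t = j).card = h)
    (hval : ∀ t, g t = j ∨ g t = k) :
    ∏ t, w (g t) = w j ^ h * w k ^ h := by
  classical
  rw [← Finset.prod_filter_mul_prod_filter_not univ (fun t => g t = j) (fun t => w (g t))]
  have e1 : ∏ t ∈ univ.filter (fun t => g t = j), w (g t) = w j ^ h := by
    rw [Finset.prod_congr rfl (fun t ht => by rw [(Finset.mem_filter.1 ht).2] :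
      ∀ t ∈ univ.filter (fun t => g t = j), w (g t) = w j), Finset.prod_const, hcard]
  have e2 : ∏ t ∈ univ.filter (fun t => ¬ g t = j), w (g t) = w k ^ h := by
    have hc : (univ.filter fun t => ¬ g t = j).card = h := by
      have h2 := Finset.card_filter_add_card_filter_not
        (s := (univ : Finset (Fin M))) (p := fun t => g t = j)
      rw [Finset.card_univ, Fintype.card_fin] at h2
      omega
    have : ∀ t ∈ univ.filter (fun t => ¬ g t = j), w (g t) = w k := by
      intro t ht
      rcases hval t with e | e
      · exact absurd e (Finset.mem_filter.1 ht).2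
      · rw [e]
    rw [Finset.prod_congr rfl this, Finset.prod_const, hc]
  rw [e1, e2]

lemma minmax_facts {M n : ℕ} (hne : (univ : Finset (Fin M)).Nonempty)
    (g : Fin M → Fin n) (j k : Fin n) (hjk : j < k)
    (hexj : ∃ t, g t = j) (hexk : ∃ t, g t = k)
    (hval : ∀ t, g t = j ∨ g t = k) :
    univ.inf' hne g = j ∧ univ.sup' hne g = k := by
  constructor
  · apply le_antisymm
    · obtain ⟨t, ht⟩ := hexj
      exact le_of_le_of_eq (Finset.inf'_le g (mem_univ t)) ht
    · apply Finset.le_inf'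
      intro t _
      rcases hval t with e | e
      · rw [e]
      · rw [e]; exact le_of_lt hjk
  · apply le_antisymm
    · apply Finset.sup'_le
      intro t _
      rcases hval t with e | e
      · rw [e]; exact le_of_lt hjk
      · rw [e]
    · obtain ⟨t, ht⟩ := hexk
      exact le_of_eq_of_le ht.symm (Finset.le_sup' g (mem_univ t))

lemma key_bound {m n h : ℕ} (hh2 : 2 ≤ h) (hM : m + 1 = h + h) (hn : 0 < n)
    (Ψ : (Fin (m + 1) → Fin n) → ℝ)
    (hstruct : ∀ f : Fin (m + 1) → Fin n, Ψ f ≠ 0 →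
      (∃ j, ∀ t, f t = j) ∨
      ∃ j k : Fin n, j ≠ k ∧
        (Finset.univ.filter fun t => f t = j).card = (m + 1) / 2 ∧
        ∀ t, f t = j ∨ f t = k)
    (hdom : ∀ (j k : Fin n) (f : Fin (m + 1) → Fin n),
      (∀ t, f t = j ∨ f t = k) →
      (Finset.univ.filter fun t => f t = j).card = (m + 1) / 2 →
      (Nat.choose m ((m + 1) / 2) : ℝ) * |Ψ f| ≤ |Ψ (fun _ => j)|)
    (A : ℝ) (hA : ∀ j, |Ψ (fun _ => j)| ≤ A)
    (w : Fin n → ℝ) (hw : ∀ i, 0 ≤ w i) :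
    ∑ g : Fin (m + 1) → Fin n, |Ψ g| * ∏ t, w (g t)
      ≤ A * (∑ j, w j ^ h) ^ 2 := by
  classical
  set a : (Fin (m + 1) → Fin n) → ℝ := fun g => |Ψ g| * ∏ t, w (g t) with ha_def
  have hanneg : ∀ g, 0 ≤ a g := fun g =>
    mul_nonneg (abs_nonneg _) (Finset.prod_nonneg fun t _ => hw _)
  have hA0 : (0 : ℝ) ≤ A := le_trans (abs_nonneg _) (hA ⟨0, hn⟩)
  have hhm : h ≤ m := by omega
  have hCpos : (0 : ℝ) < (m.choose h : ℝ) := by exact_mod_cast Nat.choose_pos hhm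
  have hhalfval : (m + 1) / 2 = h := by omega
  have hchoose : (m + 1).choose h = 2 * m.choose h := by
    obtain ⟨h', rfl⟩ : ∃ h', h = h' + 1 := ⟨h - 1, by omega⟩
    have e1 : (m + 1).choose (h' + 1) = m.choose h' + m.choose (h' + 1) :=
      Nat.choose_succ_succ m h'
    have e2 := Nat.choose_symm (n := m) (k := h' + 1) (by omega)
    have e3 : m - (h' + 1) = h' := by omega
    rw [e3] at e2
    omega
  -- split into diagonal and off-diagonal parts
  have hsplit := Finset.sum_filter_add_sum_filter_not univ
    (fun g : Fin (m + 1) → Fin n => ∀ t, g t = g 0) a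
  rw [← hsplit]
  -- diagonal part
  have hdiag : ∑ g ∈ univ.filter (fun g : Fin (m + 1) → Fin n => ∀ t, g t = g 0), a g
      ≤ ∑ j : Fin n, A * (w j ^ h * w j ^ h) := by
    have hconst : ∀ g ∈ univ.filter (fun g : Fin (m + 1) → Fin n => ∀ t, g t = g 0),
        a g = (fun j => |Ψ (fun _ => j)| * (w j ^ h * w j ^ h)) (g 0) := by
      intro g hg
      simp only [mem_filter, mem_univ, true_and] at hg
      have hgc : g = fun _ => g 0 := funext hg
      have hu : ∀ u : ℝ, u ^ (m + 1) = u ^ h * u ^ h := fun u => by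
        rw [hM, pow_add]
      have hp : ∏ t, w (g t) = w (g 0) ^ h * w (g 0) ^ h := by
        rw [hgc, Finset.prod_const, Finset.card_univ, Fintype.card_fin, hu]
      rw [ha_def]
      simp only
      rw [hp]
      congr 2
      exact congrArg Ψ hgc
    rw [Finset.sum_congr rfl hconst]
    have hinj : ∀ x ∈ univ.filter (fun g : Fin (m + 1) → Fin n => ∀ t, g t = g 0),
        ∀ y ∈ univ.filter (fun g : Fin (m + 1) → Fin n => ∀ t, g t = g 0),
        x 0 = y 0 → x = y := by
      intro g hg g' hg' he
      simp only [mem_filter, mem_univ, true_and] at hg hg'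
      funext t
      rw [hg t, hg' t, he]
    rw [← Finset.sum_image
      (f := fun j => |Ψ (fun _ => j)| * (w j ^ h * w j ^ h)) hinj]
    calc ∑ j ∈ (univ.filter (fun g : Fin (m + 1) → Fin n => ∀ t, g t = g 0)).image
          (fun g => g 0), |Ψ (fun _ => j)| * (w j ^ h * w j ^ h)
        ≤ ∑ j : Fin n, |Ψ (fun _ => j)| * (w j ^ h * w j ^ h) := by
          apply Finset.sum_le_sum_of_subset_of_nonneg (Finset.subset_univ _)
          intro j _ _
          exact mul_nonneg (abs_nonneg _)
            (mul_nonneg (pow_nonneg (hw j) h) (pow_nonneg (hw j) h))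
      _ ≤ ∑ j : Fin n, A * (w j ^ h * w j ^ h) := by
          apply Finset.sum_le_sum
          intro j _
          apply mul_le_mul_of_nonneg_right (hA j)
          exact mul_nonneg (pow_nonneg (hw j) h) (pow_nonneg (hw j) h)
  have hoff : ∑ g ∈ univ.filter (fun g : Fin (m + 1) → Fin n => ¬ ∀ t, g t = g 0), a g
      ≤ ∑ p ∈ univ.filter (fun p : Fin n × Fin n => p.1 < p.2),
          2 * A * (w p.1 ^ h * w p.2 ^ h) := by
    rw [← Finset.sum_filter_ne_zero]
    set H := (univ.filter fun g : Fin (m + 1) → Fin n => ¬ ∀ t, g t = g 0).filter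
      (fun g => a g ≠ 0) with hHdef
    have hne : (univ : Finset (Fin (m + 1))).Nonempty := ⟨0, mem_univ 0⟩
    have hfact : ∀ g ∈ H, univ.inf' hne g < univ.sup' hne g ∧
        (∀ t, g t = univ.inf' hne g ∨ g t = univ.sup' hne g) ∧
        (univ.filter fun t => g t = univ.inf' hne g).card = h := by
      intro g hg
      simp only [hHdef, mem_filter, mem_univ, true_and] at hg
      obtain ⟨hnd, hane⟩ := hg
      have hΨne : Ψ g ≠ 0 := by
        intro e
        apply hane
        rw [ha_def]
        simp [e]
      rcases hstruct g hΨne with ⟨j, hj⟩ | ⟨j, k, hjk, hcard, hval⟩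
      · exact absurd (fun t => (hj t).trans (hj 0).symm) hnd
      rw [hhalfval] at hcard
      have hck : (univ.filter fun t => g t = k).card = h :=
        card_other (by omega) g j k hjk hcard hval
      have hexj : ∃ t, g t = j := by
        have hne' : (univ.filter fun t => g t = j).Nonempty := by
          rw [← Finset.card_pos, hcard]; omega
        obtain ⟨t, ht⟩ := hne'
        exact ⟨t, (mem_filter.1 ht).2⟩
      have hexk : ∃ t, g t = k := by
        have hne' : (univ.filter fun t => g t = k).Nonempty := by
          rw [← Finset.card_pos, hck]; omega
        obtain ⟨t, ht⟩ := hne'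
        exact ⟨t, (mem_filter.1 ht).2⟩
      rcases hjk.lt_or_gt with hlt | hlt
      · obtain ⟨hinf, hsup⟩ := minmax_facts hne g j k hlt hexj hexk hval
        rw [hinf, hsup]
        exact ⟨hlt, hval, hcard⟩
      · obtain ⟨hinf, hsup⟩ := minmax_facts hne g k j hlt hexk hexj
          (fun t => (hval t).symm)
        rw [hinf, hsup]
        exact ⟨hlt, fun t => (hval t).symm, hck⟩
    set F : (Fin (m + 1) → Fin n) → (Fin n × Fin n) × Finset (Fin (m + 1)) :=
      fun g => ((univ.inf' hne g, univ.sup' hne g),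
        univ.filter (fun t => g t = univ.inf' hne g)) with hFdef
    have hrec : ∀ g ∈ H, g = fun t => if t ∈ (F g).2 then (F g).1.1 else (F g).1.2 := by
      intro g hg
      obtain ⟨h1, h2, h3⟩ := hfact g hg
      funext t
      by_cases ht : t ∈ (F g).2
      · simp only [hFdef] at ht ⊢
        rw [if_pos ht]
        exact (mem_filter.1 ht).2
      · simp only [hFdef] at ht ⊢
        rw [if_neg ht]
        rcases h2 t with e | e
        · exact absurd (mem_filter.2 ⟨mem_univ t, e⟩) ht
        · exact e
    have hinj : ∀ x ∈ H, ∀ y ∈ H, F x = F y → x = y := by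
      intro x hx y hy he
      rw [hrec x hx, hrec y hy, he]
    set b : (Fin n × Fin n) × Finset (Fin (m + 1)) → ℝ :=
      fun p => (A / (m.choose h : ℝ)) * (w p.1.1 ^ h * w p.1.2 ^ h) with hbdef
    have hterm : ∀ g ∈ H, a g ≤ b (F g) := by
      intro g hg
      obtain ⟨h1, h2, h3⟩ := hfact g hg
      have hΨle : |Ψ g| ≤ A / (m.choose h : ℝ) := by
        rw [le_div_iff₀ hCpos]
        calc |Ψ g| * (m.choose h : ℝ) = (m.choose ((m + 1) / 2) : ℝ) * |Ψ g| := by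
              rw [hhalfval]; ring
          _ ≤ |Ψ (fun _ => univ.inf' hne g)| :=
              hdom _ _ g h2 (by rw [hhalfval]; exact h3)
          _ ≤ A := hA _
      have hprod : ∏ t, w (g t) = w (univ.inf' hne g) ^ h * w (univ.sup' hne g) ^ h :=
        prod_two_vals (by omega) w g _ _ (ne_of_lt h1) h3 h2
      show |Ψ g| * ∏ t, w (g t) ≤ _
      rw [hprod]
      exact mul_le_mul_of_nonneg_right hΨle
        (mul_nonneg (pow_nonneg (hw _) h) (pow_nonneg (hw _) h))
    have hmem : ∀ g ∈ H, F g ∈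
        (univ.filter fun p : Fin n × Fin n => p.1 < p.2) ×ˢ univ.powersetCard h := by
      intro g hg
      obtain ⟨h1, h2, h3⟩ := hfact g hg
      rw [Finset.mem_product]
      exact ⟨mem_filter.2 ⟨mem_univ _, h1⟩,
        Finset.mem_powersetCard.2 ⟨Finset.subset_univ _, h3⟩⟩
    calc ∑ g ∈ H, a g ≤ ∑ g ∈ H, b (F g) := Finset.sum_le_sum hterm
      _ = ∑ p ∈ H.image F, b p := (Finset.sum_image hinj).symm
      _ ≤ ∑ p ∈ (univ.filter fun p : Fin n × Fin n => p.1 < p.2) ×ˢ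
            univ.powersetCard h, b p := by
          apply Finset.sum_le_sum_of_subset_of_nonneg
          · intro p hp
            obtain ⟨g, hg, rfl⟩ := Finset.mem_image.1 hp
            exact hmem g hg
          · intro p _ _
            exact mul_nonneg (div_nonneg hA0 (le_of_lt hCpos))
              (mul_nonneg (pow_nonneg (hw _) h) (pow_nonneg (hw _) h))
      _ = ∑ p ∈ univ.filter (fun p : Fin n × Fin n => p.1 < p.2),
            2 * A * (w p.1 ^ h * w p.2 ^ h) := by
          rw [Finset.sum_product]
          apply Finset.sum_congr rfl
          intro p hp
          simp only [hbdef]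
          rw [Finset.sum_const, Finset.card_powersetCard, Finset.card_univ,
            Fintype.card_fin, nsmul_eq_mul, hchoose]
          push_cast
          field_simp
  refine le_trans (add_le_add hdiag hoff) (le_of_eq ?_)
  rw [sq_sum_split (fun j => w j ^ h), mul_add, Finset.mul_sum, ← mul_assoc,
    Finset.mul_sum]
  congr 1
  apply Finset.sum_congr rfl
  intro p _
  ring


lemma sum_mul_tapplyC {m : ℕ} {ι : Type} [Fintype ι] (T : (Fin (m + 1) → ι) → ℂ)
    (z : ι → ℂ) :
    ∑ i, z i * tapplyC T z i = ∑ g : Fin (m + 1) → ι, T g * ∏ t, z (g t) := by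
  rw [← (Fin.consEquiv (fun _ : Fin (m+1) => ι)).sum_comp
    (fun g => T g * ∏ t, z (g t)), Fintype.sum_prod_type]
  unfold tapplyC
  congr 1; ext i
  rw [Finset.mul_sum]
  congr 1; ext f
  show z i * (T (Fin.cons i f) * ∏ j, z (f j)) = T ((Fin.consEquiv fun _ => ι) (i, f)) * ∏ t, z ((Fin.consEquiv fun _ => ι) (i, f) t)
  rw [show (Fin.consEquiv fun _ => ι) (i,f) = (Fin.cons i f : Fin (m+1) → ι) from rfl]
  have h1 : ∏ t, z ((Fin.cons i f : Fin (m+1) → ι) t) = z i * ∏ j, z (f j) := by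
    have h2 : (fun t => z ((Fin.cons i f : Fin (m+1) → ι) t))
        = Fin.cons (z i) (z ∘ f) := by
      rw [← Fin.comp_cons]; rfl
    calc ∏ t, z ((Fin.cons i f : Fin (m+1) → ι) t)
        = ∏ t, Fin.cons (z i) (z ∘ f) t := by rw [← h2]
      _ = z i * ∏ j, (z ∘ f) j := by rw [Fin.prod_cons]
      _ = z i * ∏ j, z (f j) := rfl
  rw [h1]; ring


lemma pow_sum_le_one {n h : ℕ} (hh2 : 2 ≤ h) (w : Fin n → ℝ) (hw : ∀ i, 0 ≤ w i)
    (hw1 : ∑ i, w i ^ 2 = 1) : (∑ j, w j ^ h) ^ 2 ≤ 1 := by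
  have hle1 : ∀ j, w j ≤ 1 := by
    intro j
    nlinarith [Finset.single_le_sum (f := fun i => w i ^ 2)
      (fun i _ => sq_nonneg (w i)) (mem_univ j), hw j]
  have h1 : ∑ j, w j ^ h ≤ 1 := by
    rw [← hw1]
    apply Finset.sum_le_sum
    intro j _
    exact pow_le_pow_of_le_one (hw j) (hle1 j) hh2
  have h0 : (0:ℝ) ≤ ∑ j, w j ^ h :=
    Finset.sum_nonneg fun j _ => pow_nonneg (hw j) h
  nlinarith

lemma cons_const_zero {m n h : ℕ} (hh2 : 2 ≤ h) (hM : m + 1 = h + h)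
    (Ψ : (Fin (m + 1) → Fin n) → ℝ)
    (hstruct : ∀ f : Fin (m + 1) → Fin n, Ψ f ≠ 0 →
      (∃ j, ∀ t, f t = j) ∨
      ∃ j k : Fin n, j ≠ k ∧
        (Finset.univ.filter fun t => f t = j).card = (m + 1) / 2 ∧
        ∀ t, f t = j ∨ f t = k)
    (i j : Fin n) (hij : i ≠ j) :
    Ψ (Fin.cons i (fun _ => j)) = 0 := by
  classical
  by_contra hne
  have hhalfval : (m + 1) / 2 = h := by omega
  have hm3 : 3 ≤ m := by omega
  set f : Fin (m + 1) → Fin n := Fin.cons i (fun _ => j) with hf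
  have hval0 : f 0 = i := by rw [hf]; exact Fin.cons_zero _ _
  have hvals : ∀ s : Fin m, f s.succ = j := fun s => by
    rw [hf]; exact Fin.cons_succ _ _ s
  rcases hstruct f hne with ⟨j', hj'⟩ | ⟨j', k', hne', hcard, hval⟩
  · have h1 : i = j' := by rw [← hj' 0, hval0]
    have h2 : j = j' := by
      rw [← hj' (⟨0, by omega⟩ : Fin m).succ, hvals ⟨0, by omega⟩]
    exact hij (h1.trans h2.symm)
  · rw [hhalfval] at hcard
    by_cases hj : j' = j
    · have he : univ.filter (fun t => f t = j') = univ.filter (fun t : Fin (m+1) => t ≠ 0) := by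
        apply Finset.filter_congr
        intro t _
        subst hj
        refine Fin.cases ?_ ?_ t
        · constructor
          · intro e
            rw [hval0] at e
            exact absurd e hij
          · intro e; exact absurd rfl e
        · intro s
          constructor
          · intro _; exact Fin.succ_ne_zero s
          · intro _; exact hvals s
      rw [he] at hcard
      have : (univ.filter (fun t : Fin (m+1) => t ≠ 0)) = univ.erase 0 := by
        rw [Finset.filter_ne']
      rw [this, Finset.card_erase_of_mem (mem_univ _), Finset.card_univ,
        Fintype.card_fin] at hcard
      omega
    · have hsub : univ.filter (fun t => f t = j') ⊆ {0} := by
        intro t ht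
        have het := (mem_filter.1 ht).2
        by_contra ht0
        have ht0' : t ≠ 0 := by simpa using ht0
        obtain ⟨s, rfl⟩ := Fin.exists_succ_eq.2 ht0'
        exact hj (het.symm.trans (hvals s))
      have := Finset.card_le_card hsub
      rw [hcard, Finset.card_singleton] at this
      omega


lemma tapply_collapse {m n : ℕ} {R : Type} [CommRing R] (T : (Fin (m + 1) → Fin n) → R)
    (j0 : Fin n) (c : R) (i : Fin n) :
    ∑ f : Fin m → Fin n, T (Fin.cons i f) * ∏ t, (fun i' => if i' = j0 then c else 0) (f t)
      = T (Fin.cons i (fun _ => j0)) * c ^ m := by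
  classical
  rw [Finset.sum_eq_single (fun _ : Fin m => j0)]
  · congr 1
    simp [Finset.prod_const]
  · intro f _ hf
    have hex : ∃ t, f t ≠ j0 := by
      by_contra hc
      push_neg at hc
      exact hf (funext hc)
    obtain ⟨t, ht⟩ := hex
    have h0 : ∏ t', (fun i' => if i' = j0 then c else 0) (f t') = 0 :=
      Finset.prod_eq_zero (mem_univ t) (by simp only [if_neg ht])
    rw [h0, mul_zero]
  · intro hmem; exact absurd (mem_univ _) hmem

lemma cons_self_const {m n : ℕ} (i : Fin n) :
    (Fin.cons i (fun _ => i) : Fin (m + 1) → Fin n) = fun _ => i := by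
  funext t
  refine Fin.cases ?_ ?_ t
  · exact Fin.cons_zero _ _
  · intro s; exact Fin.cons_succ _ _ s

lemma zeig_indicator {m n h : ℕ} (hh2 : 2 ≤ h) (hM : m + 1 = h + h)
    (Ψ : (Fin (m + 1) → Fin n) → ℝ)
    (hstruct : ∀ f : Fin (m + 1) → Fin n, Ψ f ≠ 0 →
      (∃ j, ∀ t, f t = j) ∨
      ∃ j k : Fin n, j ≠ k ∧
        (Finset.univ.filter fun t => f t = j).card = (m + 1) / 2 ∧
        ∀ t, f t = j ∨ f t = k)
    (j0 : Fin n) :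
    IsZEig Ψ (Ψ (fun _ => j0)) (fun i => if i = j0 then 1 else 0) := by
  classical
  constructor
  · funext i
    show (∑ f : Fin m → Fin n, Ψ (Fin.cons i f) *
      ∏ t, (fun i' => if i' = j0 then (1:ℝ) else 0) (f t)) = _
    rw [tapply_collapse Ψ j0 1 i, one_pow, mul_one]
    simp only []
    by_cases hi : i = j0
    · subst hi
      rw [if_pos rfl, mul_one, cons_self_const]
    · rw [if_neg hi, mul_zero]
      exact cons_const_zero hh2 hM Ψ hstruct i j0 hi
  · rw [Finset.sum_eq_single j0]
    · simp
    · intro b _ hb; simp [hb]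
    · intro hmem; exact absurd (mem_univ _) hmem

lemma qeig_attain {m n h : ℕ} (hh2 : 2 ≤ h) (hM : m + 1 = h + h)
    (Ψ : (Fin (m + 1) → Fin n) → ℝ)
    (hstruct : ∀ f : Fin (m + 1) → Fin n, Ψ f ≠ 0 →
      (∃ j, ∀ t, f t = j) ∨
      ∃ j k : Fin n, j ≠ k ∧
        (Finset.univ.filter fun t => f t = j).card = (m + 1) / 2 ∧
        ∀ t, f t = j ∨ f t = k)
    (j0 : Fin n) :
    ∃ z : Fin n → ℂ, IsQEig (toC Ψ) |Ψ (fun _ => j0)| z := by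
  classical
  rcases le_or_gt 0 (Ψ (fun _ => j0)) with hpos | hneg
  · refine ⟨fun i => if i = j0 then 1 else 0, ?_, ?_⟩
    · funext i
      show (∑ f : Fin m → Fin n, toC Ψ (Fin.cons i f) *
        ∏ t, (fun i' => if i' = j0 then (1:ℂ) else 0) (f t)) = _
      rw [tapply_collapse (toC Ψ) j0 1 i, one_pow, mul_one]
      simp only []
      by_cases hi : i = j0
      · subst hi
        rw [if_pos rfl, map_one, mul_one, cons_self_const]
        unfold toC
        rw [abs_of_nonneg hpos]
      · rw [if_neg hi, map_zero, mul_zero]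
        unfold toC
        rw [cons_const_zero hh2 hM Ψ hstruct i j0 hi, Complex.ofReal_zero]
    · rw [Finset.sum_eq_single j0]
      · simp
      · intro b _ hb; simp [hb]
      · intro hmem; exact absurd (mem_univ _) hmem
  · set c : ℂ := Complex.exp ((Real.pi / (m + 1) : ℝ) * Complex.I) with hc
    have habs : ‖c‖ = 1 := by rw [hc]; exact Complex.norm_exp_ofReal_mul_I _
    have hc1 : (starRingEnd ℂ) c * c = 1 := by
      rw [mul_comm, Complex.mul_conj, Complex.normSq_eq_norm_sq, habs]
      norm_num
    have hcM : c ^ (m + 1) = -1 := by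
      rw [hc, ← Complex.exp_nat_mul]
      have he : ((m : ℂ) + 1) * (((Real.pi / (m + 1) : ℝ) : ℂ) * Complex.I)
          = (Real.pi : ℂ) * Complex.I := by
        have hm0 : ((m : ℂ) + 1) ≠ 0 := Nat.cast_add_one_ne_zero m
        push_cast
        field_simp
      push_cast at he ⊢
      rw [he, Complex.exp_pi_mul_I]
    have hcm : c ^ m * c = -1 := by rw [← pow_succ]; exact hcM
    have hcne : c ≠ 0 := by rw [hc]; exact Complex.exp_ne_zero _
    refine ⟨fun i => if i = j0 then c else 0, ?_, ?_⟩
    · funext i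
      show (∑ f : Fin m → Fin n, toC Ψ (Fin.cons i f) *
        ∏ t, (fun i' => if i' = j0 then c else 0) (f t)) = _
      rw [tapply_collapse (toC Ψ) j0 c i]
      simp only []
      by_cases hi : i = j0
      · subst hi
        rw [if_pos rfl, cons_self_const, abs_of_neg hneg]
        unfold toC
        apply mul_right_cancel₀ hcne
        rw [mul_assoc, hcm, mul_assoc, hc1]
        push_cast
        ring
      · rw [if_neg hi, map_zero, mul_zero]
        unfold toC
        rw [cons_const_zero hh2 hM Ψ hstruct i j0 hi, Complex.ofReal_zero, zero_mul]
    · rw [Finset.sum_eq_single j0]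
      · simpa using hc1
      · intro b _ hb; simp [hb]
      · intro hmem; exact absurd (mem_univ _) hmem

lemma zeig_to_qeig {m n : ℕ} (Ψ : (Fin (m + 1) → Fin n) → ℝ) {lam : ℝ} {x : Fin n → ℝ}
    (hz : IsZEig Ψ lam x) : IsQEig (toC Ψ) lam (fun i => (x i : ℂ)) := by
  obtain ⟨he, hn1⟩ := hz
  constructor
  · funext i
    have h1 : tapplyC (toC Ψ) (fun i => (x i : ℂ)) i = ((tapplyR Ψ x i : ℝ) : ℂ) := by
      unfold tapplyC tapplyR toC
      push_cast
      rfl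
    rw [h1, congrFun he i]
    push_cast
    rw [Complex.conj_ofReal]
  · have h2 : ∀ i, (starRingEnd ℂ) ((x i : ℂ)) * (x i : ℂ) = ((x i ^ 2 : ℝ) : ℂ) := by
      intro i
      rw [Complex.conj_ofReal]
      push_cast
      ring
    rw [Finset.sum_congr rfl (fun i _ => h2 i), ← Complex.ofReal_sum, hn1,
      Complex.ofReal_one]

lemma qeig_bound {m n h : ℕ} (hh2 : 2 ≤ h) (hM : m + 1 = h + h) (hn : 0 < n)
    (Ψ : (Fin (m + 1) → Fin n) → ℝ)
    (hstruct : ∀ f : Fin (m + 1) → Fin n, Ψ f ≠ 0 →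
      (∃ j, ∀ t, f t = j) ∨
      ∃ j k : Fin n, j ≠ k ∧
        (Finset.univ.filter fun t => f t = j).card = (m + 1) / 2 ∧
        ∀ t, f t = j ∨ f t = k)
    (hdom : ∀ (j k : Fin n) (f : Fin (m + 1) → Fin n),
      (∀ t, f t = j ∨ f t = k) →
      (Finset.univ.filter fun t => f t = j).card = (m + 1) / 2 →
      (Nat.choose m ((m + 1) / 2) : ℝ) * |Ψ f| ≤ |Ψ (fun _ => j)|)
    (A : ℝ) (hA : ∀ j, |Ψ (fun _ => j)| ≤ A)
    {lam : ℝ} {z : Fin n → ℂ} (hq : IsQEig (toC Ψ) lam z) : |lam| ≤ A := by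
  obtain ⟨heig, hnorm⟩ := hq
  have hA0 : (0:ℝ) ≤ A := le_trans (abs_nonneg _) (hA ⟨0, hn⟩)
  set w : Fin n → ℝ := fun i => ‖z i‖ with hw
  have hwnn : ∀ i, 0 ≤ w i := fun i => norm_nonneg _
  have hw1 : ∑ i, w i ^ 2 = 1 := by
    have h2 : ∀ i, (starRingEnd ℂ) (z i) * z i = ((w i ^ 2 : ℝ) : ℂ) := by
      intro i
      rw [mul_comm, Complex.mul_conj, Complex.normSq_eq_norm_sq]
    rw [Finset.sum_congr rfl (fun i _ => h2 i), ← Complex.ofReal_sum] at hnorm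
    exact_mod_cast hnorm
  have hlam : (lam : ℂ) = ∑ g : Fin (m + 1) → Fin n, toC Ψ g * ∏ t, z (g t) := by
    calc (lam : ℂ) = (lam : ℂ) * ∑ i, (starRingEnd ℂ) (z i) * z i := by
          rw [hnorm, mul_one]
      _ = ∑ i, z i * ((lam : ℂ) * (starRingEnd ℂ) (z i)) := by
          rw [Finset.mul_sum]
          exact Finset.sum_congr rfl fun i _ => by ring
      _ = ∑ i, z i * tapplyC (toC Ψ) z i := by
          apply Finset.sum_congr rfl
          intro i _
          rw [congrFun heig i]
      _ = _ := sum_mul_tapplyC _ _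
  calc |lam| = ‖(lam : ℂ)‖ := by rw [Complex.norm_real, Real.norm_eq_abs]
    _ = ‖(∑ g : Fin (m + 1) → Fin n, toC Ψ g * ∏ t, z (g t))‖ := by rw [hlam]
    _ ≤ ∑ g : Fin (m + 1) → Fin n, ‖toC Ψ g * ∏ t, z (g t)‖ :=
        norm_sum_le _ _
    _ = ∑ g : Fin (m + 1) → Fin n, |Ψ g| * ∏ t, w (g t) := by
        apply Finset.sum_congr rfl
        intro g _
        rw [norm_mul, norm_prod]
        unfold toC
        rw [Complex.norm_real, Real.norm_eq_abs]
    _ ≤ A * (∑ j, w j ^ h) ^ 2 := key_bound hh2 hM hn Ψ hstruct hdom A hA w hwnn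
    _ ≤ A * 1 := mul_le_mul_of_nonneg_left (pow_sum_le_one hh2 w hwnn hw1) hA0
    _ = A := mul_one A

/-- even order ≥ 4, half-half index structure and diagonal dominance
imply Q(Ψ) = Z(Ψ) = max_j |Ψ_{j⋯j}| (here the order is m + 1). -/
theorem half_half_diagonally_dominated {m n : ℕ} (hm : 4 ≤ m + 1)
    (heven : Even (m + 1)) (hn : 0 < n)
    (Ψ : (Fin (m + 1) → Fin n) → ℝ) (hΨ : SymmT Ψ)
    (hstruct : ∀ f : Fin (m + 1) → Fin n, Ψ f ≠ 0 →
      (∃ j, ∀ t, f t = j) ∨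
      ∃ j k : Fin n, j ≠ k ∧
        (Finset.univ.filter fun t => f t = j).card = (m + 1) / 2 ∧
        ∀ t, f t = j ∨ f t = k)
    (hdom : ∀ (j k : Fin n) (f : Fin (m + 1) → Fin n),
      (∀ t, f t = j ∨ f t = k) →
      (Finset.univ.filter fun t => f t = j).card = (m + 1) / 2 →
      (Nat.choose m ((m + 1) / 2) : ℝ) * |Ψ f| ≤ |Ψ (fun _ => j)|) :
    QmaxR Ψ = Zrad Ψ ∧
      Zrad Ψ = Finset.univ.sup' ⟨⟨0, hn⟩, Finset.mem_univ _⟩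
        (fun j => |Ψ (fun _ => j)|) := by
  classical
  obtain ⟨h, hM⟩ := heven
  have hh2 : 2 ≤ h := by omega
  set A := Finset.univ.sup' (⟨⟨0, hn⟩, Finset.mem_univ _⟩ :
    (Finset.univ : Finset (Fin n)).Nonempty) (fun j => |Ψ (fun _ => j)|) with hAdef
  have hA : ∀ j, |Ψ (fun _ => j)| ≤ A := fun j =>
    Finset.le_sup' (fun j => |Ψ (fun _ => j)|) (mem_univ j)
  obtain ⟨j0, -, hj0⟩ := Finset.exists_mem_eq_sup' (⟨⟨0, hn⟩, Finset.mem_univ _⟩ :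
    (Finset.univ : Finset (Fin n)).Nonempty) (fun j => |Ψ (fun _ => j)|)
  rw [← hAdef] at hj0
  have hQset : IsGreatest {lam : ℝ | ∃ z : Fin n → ℂ, IsQEig (toC Ψ) lam z} A := by
    constructor
    · obtain ⟨z, hz⟩ := qeig_attain hh2 hM Ψ hstruct j0
      exact ⟨z, hj0 ▸ hz⟩
    · rintro lam ⟨z, hz⟩
      exact le_trans (le_abs_self lam) (qeig_bound hh2 hM hn Ψ hstruct hdom A hA hz)
  have hZset : IsGreatest
      {r : ℝ | ∃ (lam : ℝ) (x : Fin n → ℝ), IsZEig Ψ lam x ∧ r = |lam|} A := by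
    constructor
    · exact ⟨Ψ (fun _ => j0), _, zeig_indicator hh2 hM Ψ hstruct j0, hj0⟩
    · rintro r ⟨lam, x, hz, rfl⟩
      exact qeig_bound hh2 hM hn Ψ hstruct hdom A hA (zeig_to_qeig Ψ hz)
  have e1 : QmaxR Ψ = A := hQset.csSup_eq
  have e2 : Zrad Ψ = A := hZset.csSup_eq
  exact ⟨e1.trans e2.symm, e2⟩
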